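/- Suppose v_{i,j} ≤ B_i for every bidder i and every query j. Then in every FPA equilibrium, for every bidder i and every query j such that j ∉ N(i) and Spend(j) < v_{i,j}, it holds that v_{i,j} ≤ V_i. -/

import Mathlib

open Finset
open scoped Classical

noncomputable section

/-- An allocation: each entry in `[0,1]`, and each query allocated total probability at most 1. -/
def IsAlloc {n q : ℕ} (π : Fin n → Fin q → ℝ) : Prop :=
  (∀ i j, 0 ≤ π i j) ∧ (∀ i j, π i j ≤ 1) ∧ ∀ j, ∑ i, π i j ≤ 1

/-- An integral (deterministic) allocation. -/
def IsIntegralAlloc {n q : ℕ} (π : Fin n → Fin q → ℝ) : Prop :=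
  IsAlloc π ∧ ∀ i j, π i j = 0 ∨ π i j = 1

/-- Liquid welfare of an allocation. -/
def allocLW {n q : ℕ} (B : Fin n → ℝ) (v π : Fin n → Fin q → ℝ) : ℝ :=
  ∑ i, min (B i) (∑ j, π i j * v i j)

/-- A deterministic tie-breaking / winner rule for first-price auctions:
given a bid profile, it selects on each query a bidder whose bid is maximal. -/
def IsWinnerRule {n q : ℕ} (W : (Fin n → Fin q → ℝ) → Fin q → Fin n) : Prop :=
  ∀ (b : Fin n → Fin q → ℝ) (j : Fin q) (i : Fin n), b i j ≤ b (W b j) j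

/-- The set of queries bidder `i` wins under bid profile `b`. -/
def fpaN {n q : ℕ} (W : (Fin n → Fin q → ℝ) → Fin q → Fin n)
    (b : Fin n → Fin q → ℝ) (i : Fin n) : Finset (Fin q) :=
  Finset.univ.filter fun j => W b j = i

/-- The total value bidder `i` obtains. -/
def fpaV {n q : ℕ} (v : Fin n → Fin q → ℝ) (W : (Fin n → Fin q → ℝ) → Fin q → Fin n)
    (b : Fin n → Fin q → ℝ) (i : Fin n) : ℝ :=
  ∑ j ∈ fpaN W b i, v i j

/-- The spend (winning bid) on query `j`. -/
def fpaSpendQ {n q : ℕ} (W : (Fin n → Fin q → ℝ) → Fin q → Fin n)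
    (b : Fin n → Fin q → ℝ) (j : Fin q) : ℝ :=
  b (W b j) j

/-- The total spend of bidder `i`. -/
def fpaSpendI {n q : ℕ} (W : (Fin n → Fin q → ℝ) → Fin q → Fin n)
    (b : Fin n → Fin q → ℝ) (i : Fin n) : ℝ :=
  ∑ j ∈ fpaN W b i, b i j

/-- Liquid welfare of a bid profile in FPA. -/
def fpaLW {n q : ℕ} (B : Fin n → ℝ) (v : Fin n → Fin q → ℝ)
    (W : (Fin n → Fin q → ℝ) → Fin q → Fin n) (b : Fin n → Fin q → ℝ) : ℝ :=
  ∑ i, min (B i) (fpaV v W b i)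

/-- Equilibrium of a first-price auction with ROS and budget constraints:
bids are nonnegative, each bidder satisfies their constraints, and for any deviation
of a single bidder, either the bidder's value does not increase, or a constraint is violated. -/
def IsFpaEq {n q : ℕ} (B : Fin n → ℝ) (v : Fin n → Fin q → ℝ)
    (W : (Fin n → Fin q → ℝ) → Fin q → Fin n) (b : Fin n → Fin q → ℝ) : Prop :=
  (∀ i j, 0 ≤ b i j) ∧
  (∀ i, fpaSpendI W b i ≤ min (B i) (fpaV v W b i)) ∧
  (∀ i (b' : Fin q → ℝ), (∀ j, 0 ≤ b' j) →
    (∑ j ∈ fpaN W (Function.update b i b') i, v i j ≤ fpaV v W b i) ∨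
    (min (B i) (∑ j ∈ fpaN W (Function.update b i b') i, v i j)
      < ∑ j ∈ fpaN W (Function.update b i b') i, b' j))

/-- suppose `v i j ≤ B i` for all `i, j`. In every FPA equilibrium, for every
bidder `i` and query `j ∉ N(i)` with `Spend(j) < v i j`, one has `v i j ≤ V i`. -/
theorem stmt10 (n q : ℕ) (B : Fin n → ℝ) (v : Fin n → Fin q → ℝ)
    (hB : ∀ i, 0 < B i) (hv : ∀ i j, 0 ≤ v i j)
    (hvB : ∀ i j, v i j ≤ B i)
    (W : (Fin n → Fin q → ℝ) → Fin q → Fin n) (hW : IsWinnerRule W)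
    (b : Fin n → Fin q → ℝ) (hb : IsFpaEq B v W b)
    (i : Fin n) (j : Fin q) (hij : W b j ≠ i) (hsp : fpaSpendQ W b j < v i j) :
    v i j ≤ fpaV v W b i := by
  obtain ⟨hb0, hcons, hdev⟩ := hb
  set b' : Fin q → ℝ := fun j' => if j' = j then v i j else 0 with hb'
  have hb'0 : ∀ j', 0 ≤ b' j' := by
    intro j'; simp only [hb']; split
    exacts [hv i j, le_refl 0]
  set bb := Function.update b i b' with hbb
  -- i wins query j under the deviation
  have hwin : W bb j = i := by
    by_contra hne
    have h1 : bb i j ≤ bb (W bb j) j := hW bb j i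
    have h2 : bb i j = v i j := by simp [hbb, hb']
    have h3 : bb (W bb j) j = b (W bb j) j := by
      exact congrFun (Function.update_of_ne hne _ _) j
    have h4 : b (W bb j) j ≤ b (W b j) j := hW b j (W bb j)
    have : v i j ≤ fpaSpendQ W b j := by
      rw [fpaSpendQ]; calc v i j = bb i j := h2.symm
        _ ≤ bb (W bb j) j := h1
        _ = b (W bb j) j := h3
        _ ≤ b (W b j) j := h4
    linarith
  have hjmem : j ∈ fpaN W bb i := by
    simp [fpaN, hwin]
  have hvle : v i j ≤ ∑ j' ∈ fpaN W bb i, v i j' :=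
    Finset.single_le_sum (fun j' _ => hv i j') hjmem
  have hsum : ∑ j' ∈ fpaN W bb i, b' j' = v i j := by
    rw [Finset.sum_eq_single_of_mem j hjmem]
    · simp [hb']
    · intro j' _ hne; simp [hb', hne]
  rcases hdev i b' hb'0 with h | h
  · rw [← hbb] at h; linarith
  · rw [← hbb] at h
    rw [hsum] at h
    have hmin : v i j ≤ min (B i) (∑ j' ∈ fpaN W bb i, v i j') :=
      le_min (hvB i j) hvle
    linarith
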